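/- Let T be a linear operator on M_{m×n}(S) that preserves the rank of every rank-1 matrix, and suppose there exist permutations ρ of {1,…,m} and σ of {1,…,n} and units α_{ij} of S with T(E_{ij}) = α_{ij} E_{ρ(i),σ(j)} for all (i,j) (or m = n and T(E_{ij}) = α_{ij} E_{σ(j),ρ(i)} for all (i,j)). Then α_{ij}·α_{lk} = α_{lj}·α_{ik} for all i, l ∈ {1,…,m} and j, k ∈ {1,…,n}; consequently there exist units c₁,…,c_m and d₁,…,d_n of S such that α_{ij} = cᵢ·d_j for all (i,j), i.e., there are invertible diagonal matrices C (m×m) and D (n×n) with α_{ij} = C_{ii}·D_{jj}. -/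

import Mathlib

open scoped Classical

/-- The semiring rank of an `m × n` matrix over `S`: the least positive `k` such that
`A = B * C` for some `m × k` matrix `B` and `k × n` matrix `C`; the rank of `0` is `0`. -/
noncomputable def matRank {S : Type*} [CommSemiring S] {m n : ℕ}
    (A : Matrix (Fin m) (Fin n) S) : ℕ :=
  if A = 0 then 0
  else sInf {k : ℕ | 0 < k ∧
    ∃ (B : Matrix (Fin m) (Fin k) S) (C : Matrix (Fin k) (Fin n) S), A = B * C}

lemma matRank_eq_one_of_factor {S : Type*} [CommSemiring S] {m n : ℕ}
    {A : Matrix (Fin m) (Fin n) S} (h0 : A ≠ 0)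
    (B : Matrix (Fin m) (Fin 1) S) (C : Matrix (Fin 1) (Fin n) S) (h : A = B * C) :
    matRank A = 1 := by
  unfold matRank
  rw [if_neg h0]
  have h1 : 1 ∈ {k : ℕ | 0 < k ∧
      ∃ (B : Matrix (Fin m) (Fin k) S) (C : Matrix (Fin k) (Fin n) S), A = B * C} :=
    ⟨one_pos, B, C, h⟩
  have hle := Nat.sInf_le h1
  have hmem := Nat.sInf_mem (⟨1, h1⟩ : Set.Nonempty _)
  exact le_antisymm hle hmem.1

lemma factor_of_matRank_one {S : Type*} [CommSemiring S] {m n : ℕ}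
    {A : Matrix (Fin m) (Fin n) S} (h : matRank A = 1) :
    ∃ (B : Matrix (Fin m) (Fin 1) S) (C : Matrix (Fin 1) (Fin n) S), A = B * C := by
  unfold matRank at h
  by_cases h0 : A = 0
  · rw [if_pos h0] at h; simp at h
  · rw [if_neg h0] at h
    have hne : {k : ℕ | 0 < k ∧
        ∃ (B : Matrix (Fin m) (Fin k) S) (C : Matrix (Fin k) (Fin n) S), A = B * C}.Nonempty := by
      by_contra hemp
      rw [Set.not_nonempty_iff_eq_empty] at hemp
      rw [hemp, Nat.sInf_empty] at h
      simp at h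
    have hmem := Nat.sInf_mem hne
    rw [h] at hmem
    exact hmem.2

lemma isUnit_diag {S : Type*} [CommSemiring S] {m : ℕ} (c : Fin m → S)
    (h : ∀ i, IsUnit (c i)) : IsUnit (Matrix.diagonal c) := by
  choose u hu using h
  refine ⟨⟨Matrix.diagonal c, Matrix.diagonal fun i => (((u i)⁻¹ : Sˣ) : S), ?_, ?_⟩, rfl⟩
  · rw [Matrix.diagonal_mul_diagonal]
    have h' : (fun i => c i * (((u i)⁻¹ : Sˣ) : S)) = fun _ => (1 : S) := funext fun i => by
      rw [← hu i, Units.mul_inv]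
    rw [h']
    exact Matrix.diagonal_one
  · rw [Matrix.diagonal_mul_diagonal]
    have h' : (fun i => (((u i)⁻¹ : Sˣ) : S) * c i) = fun _ => (1 : S) := funext fun i => by
      rw [← hu i, Units.inv_mul]
    rw [h']
    exact Matrix.diagonal_one

theorem stmt10 {S : Type*} [CommSemiring S]
    (haddidem : ∀ a : S, a + a = a)
    (hmc : ∀ a b c : S, a ≠ 0 → b * a = c * a → b = c)
    (haui : ∀ a b : S, IsUnit (a + b) → IsUnit a ∨ IsUnit b)
    {m n : ℕ}
    (T : Matrix (Fin m) (Fin n) S →ₗ[S] Matrix (Fin m) (Fin n) S)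
    (h1 : ∀ A : Matrix (Fin m) (Fin n) S, matRank A = 1 → matRank (T A) = 1)
    (ρ : Equiv.Perm (Fin m)) (σ : Equiv.Perm (Fin n)) (α : Fin m → Fin n → S)
    (hα : ∀ i j, IsUnit (α i j))
    (hform : (∀ (i : Fin m) (j : Fin n),
        T (Matrix.single i j 1) = α i j • Matrix.single (ρ i) (σ j) 1) ∨
      (∃ h : m = n, ∀ (i : Fin m) (j : Fin n),
        T (Matrix.single i j 1) =
          α i j • Matrix.single (Fin.cast h.symm (σ j)) (Fin.cast h (ρ i)) 1)) :
    (∀ (i l : Fin m) (j k : Fin n), α i j * α l k = α l j * α i k) ∧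
    ∃ (c : Fin m → S) (d : Fin n → S),
      (∀ i, IsUnit (c i)) ∧ (∀ j, IsUnit (d j)) ∧
      (∀ (i : Fin m) (j : Fin n), α i j = c i * d j) ∧
      ∃ (C : Matrix (Fin m) (Fin m) S) (D : Matrix (Fin n) (Fin n) S),
        C = Matrix.diagonal c ∧ D = Matrix.diagonal d ∧ IsUnit C ∧ IsUnit D ∧
        ∀ (i : Fin m) (j : Fin n), α i j = C i i * D j j := by
  by_cases h10 : (1 : S) = 0
  · -- trivial semiring
    have hsub : Subsingleton S := subsingleton_of_zero_eq_one h10.symm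
    refine ⟨fun i l j k => Subsingleton.elim _ _,
      fun _ => 1, fun _ => 1, fun _ => isUnit_one, fun _ => isUnit_one,
      fun i j => Subsingleton.elim _ _,
      Matrix.diagonal _, Matrix.diagonal _, rfl, rfl, ?_, ?_, fun i j => Subsingleton.elim _ _⟩
    · have : (Matrix.diagonal (fun _ => (1:S)) : Matrix (Fin m) (Fin m) S) = 1 :=
        Subsingleton.elim _ _
      rw [this]; exact isUnit_one
    · have : (Matrix.diagonal (fun _ => (1:S)) : Matrix (Fin n) (Fin n) S) = 1 :=
        Subsingleton.elim _ _
      rw [this]; exact isUnit_one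
  · have key : ∀ (i l : Fin m) (j k : Fin n), α i j * α l k = α l j * α i k := by
      intro i l j k
      by_cases hil : i = l
      · subst hil; ring
      by_cases hjk : j = k
      · subst hjk; ring
      -- the rank-one matrix A
      have hA0 : (Matrix.single i j (1:S) + Matrix.single i k 1 +
          Matrix.single l j 1 + Matrix.single l k 1) ≠ 0 := by
        intro hz
        have hz' := congrFun (congrFun hz i) j
        simp [Matrix.add_apply, Matrix.single, hil, hjk, Ne.symm hil, Ne.symm hjk] at hz'
        exact h10 hz'
      have hfac : (Matrix.single i j (1:S) + Matrix.single i k 1 +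
          Matrix.single l j 1 + Matrix.single l k 1) = (Matrix.of fun p (_ : Fin 1) => if i = p ∨ l = p then (1:S) else 0) *
          (Matrix.of fun (_ : Fin 1) q => if j = q ∨ k = q then (1:S) else 0) := by
        ext p q
        rw [Matrix.mul_apply, Fin.sum_univ_one]
        by_cases hpi : i = p <;> by_cases hpl : l = p <;>
          by_cases hqj : j = q <;> by_cases hqk : k = q
        all_goals (try exact absurd (hpi.trans hpl.symm) hil)
        all_goals (try exact absurd (hqj.trans hqk.symm) hjk)
        all_goals simp [Matrix.add_apply, Matrix.single, hpi, hpl, hqj, hqk]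
      have hA1 : matRank (Matrix.single i j (1:S) + Matrix.single i k 1 +
          Matrix.single l j 1 + Matrix.single l k 1) = 1 :=
        matRank_eq_one_of_factor hA0 _ _ hfac
      obtain ⟨B, C, hBC⟩ := factor_of_matRank_one (h1 _ hA1)
      have hE : ∀ p q, T (Matrix.single i j (1:S) + Matrix.single i k 1 +
          Matrix.single l j 1 + Matrix.single l k 1) p q = B p 0 * C 0 q := by
        intro p q; rw [hBC, Matrix.mul_apply, Fin.sum_univ_one]
      rcases hform with hL | ⟨hmn, hL⟩
      · have hTA : T (Matrix.single i j (1:S) + Matrix.single i k 1 +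
            Matrix.single l j 1 + Matrix.single l k 1) =
            α i j • Matrix.single (ρ i) (σ j) 1 +
            α i k • Matrix.single (ρ i) (σ k) 1 +
            α l j • Matrix.single (ρ l) (σ j) 1 +
            α l k • Matrix.single (ρ l) (σ k) 1 := by
          rw [map_add, map_add, map_add, hL, hL, hL, hL]
        have hρ : ρ i ≠ ρ l := fun h => hil (ρ.injective h)
        have hσ : σ j ≠ σ k := fun h => hjk (σ.injective h)
        have f1 : α i j = B (ρ i) 0 * C 0 (σ j) := by
          rw [← hE, hTA]
          simp [Matrix.add_apply, Matrix.single, hρ, hσ, Ne.symm hρ, Ne.symm hσ]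
        have f2 : α i k = B (ρ i) 0 * C 0 (σ k) := by
          rw [← hE, hTA]
          simp [Matrix.add_apply, Matrix.single, hρ, hσ, Ne.symm hρ, Ne.symm hσ]
        have f3 : α l j = B (ρ l) 0 * C 0 (σ j) := by
          rw [← hE, hTA]
          simp [Matrix.add_apply, Matrix.single, hρ, hσ, Ne.symm hρ, Ne.symm hσ]
        have f4 : α l k = B (ρ l) 0 * C 0 (σ k) := by
          rw [← hE, hTA]
          simp [Matrix.add_apply, Matrix.single, hρ, hσ, Ne.symm hρ, Ne.symm hσ]
        rw [f1, f2, f3, f4]; ring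
      · have hTA : T (Matrix.single i j (1:S) + Matrix.single i k 1 +
            Matrix.single l j 1 + Matrix.single l k 1) =
            α i j • Matrix.single (Fin.cast hmn.symm (σ j)) (Fin.cast hmn (ρ i)) 1 +
            α i k • Matrix.single (Fin.cast hmn.symm (σ k)) (Fin.cast hmn (ρ i)) 1 +
            α l j • Matrix.single (Fin.cast hmn.symm (σ j)) (Fin.cast hmn (ρ l)) 1 +
            α l k • Matrix.single (Fin.cast hmn.symm (σ k)) (Fin.cast hmn (ρ l)) 1 := by
          rw [map_add, map_add, map_add, hL, hL, hL, hL]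
        have hρ : Fin.cast hmn (ρ i) ≠ Fin.cast hmn (ρ l) := by
          intro h
          exact hil (ρ.injective (Fin.ext (by simpa [Fin.ext_iff] using h)))
        have hσ : Fin.cast hmn.symm (σ j) ≠ Fin.cast hmn.symm (σ k) := by
          intro h
          exact hjk (σ.injective (Fin.ext (by simpa [Fin.ext_iff] using h)))
        have f1 : α i j = B (Fin.cast hmn.symm (σ j)) 0 * C 0 (Fin.cast hmn (ρ i)) := by
          rw [← hE, hTA]
          simp [Matrix.add_apply, Matrix.single, hρ, hσ, Ne.symm hρ, Ne.symm hσ]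
        have f2 : α i k = B (Fin.cast hmn.symm (σ k)) 0 * C 0 (Fin.cast hmn (ρ i)) := by
          rw [← hE, hTA]
          simp [Matrix.add_apply, Matrix.single, hρ, hσ, Ne.symm hρ, Ne.symm hσ]
        have f3 : α l j = B (Fin.cast hmn.symm (σ j)) 0 * C 0 (Fin.cast hmn (ρ l)) := by
          rw [← hE, hTA]
          simp [Matrix.add_apply, Matrix.single, hρ, hσ, Ne.symm hρ, Ne.symm hσ]
        have f4 : α l k = B (Fin.cast hmn.symm (σ k)) 0 * C 0 (Fin.cast hmn (ρ l)) := by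
          rw [← hE, hTA]
          simp [Matrix.add_apply, Matrix.single, hρ, hσ, Ne.symm hρ, Ne.symm hσ]
        rw [f1, f2, f3, f4]; ring
    refine ⟨key, ?_⟩
    rcases Nat.eq_zero_or_pos m with hm | hm
    · refine ⟨fun _ => 1, fun _ => 1, fun _ => isUnit_one, fun _ => isUnit_one,
        fun i _ => absurd i.isLt (by omega),
        Matrix.diagonal _, Matrix.diagonal _, rfl, rfl,
        isUnit_diag _ (fun _ => isUnit_one), isUnit_diag _ (fun _ => isUnit_one),
        fun i _ => absurd i.isLt (by omega)⟩
    rcases Nat.eq_zero_or_pos n with hn | hn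
    · refine ⟨fun _ => 1, fun _ => 1, fun _ => isUnit_one, fun _ => isUnit_one,
        fun _ j => absurd j.isLt (by omega),
        Matrix.diagonal _, Matrix.diagonal _, rfl, rfl,
        isUnit_diag _ (fun _ => isUnit_one), isUnit_diag _ (fun _ => isUnit_one),
        fun _ j => absurd j.isLt (by omega)⟩
    set i0 : Fin m := ⟨0, hm⟩
    set j0 : Fin n := ⟨0, hn⟩
    obtain ⟨u, hu⟩ := hα i0 j0
    set c : Fin m → S := fun i => α i j0 * ↑u⁻¹ with hc
    set d : Fin n → S := fun j => α i0 j with hd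
    have hcd : ∀ i j, α i j = c i * d j := by
      intro i j
      have := key i i0 j0 j   -- α i j0 * α i0 j = α i0 j0 * α i j
      calc α i j = 1 * α i j := (one_mul _).symm
        _ = (↑u⁻¹ * ↑u) * α i j := by rw [Units.inv_mul]
        _ = ↑u⁻¹ * (α i0 j0 * α i j) := by rw [hu]; ring
        _ = ↑u⁻¹ * (α i j0 * α i0 j) := by rw [← this]
        _ = c i * d j := by rw [hc, hd]; ring
    refine ⟨c, d, fun i => (hα i j0).mul (Units.isUnit u⁻¹), fun j => hα i0 j, hcd,
      Matrix.diagonal c, Matrix.diagonal d, rfl, rfl,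
      isUnit_diag _ (fun i => (hα i j0).mul (Units.isUnit u⁻¹)),
      isUnit_diag _ (fun j => hα i0 j), ?_⟩
    intro i j
    simp [Matrix.diagonal_apply_eq, hcd i j]
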